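/- For all positive integers m and n, the number of cyclic subgroups of Z/m × Z/n equals the sum over divisors a of m and b of n of φ(gcd(a,b)), where φ is Euler's totient function. -/

import Mathlib

open AddSubgroup Finset

private lemma totient_gcd_lcm' {a b : ℕ} (ha : 0 < a) (hb : 0 < b) :
    (Nat.gcd a b).totient * (Nat.lcm a b).totient = a.totient * b.totient := by
  have hg : 0 < Nat.gcd a b := Nat.gcd_pos_of_pos_left _ ha
  have hgd : Nat.gcd a b ∣ Nat.lcm a b := (Nat.gcd_dvd_left a b).trans (Nat.dvd_lcm_left a b)
  have h2 := Nat.totient_gcd_mul_totient_mul (Nat.gcd a b) (Nat.lcm a b)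
  rw [Nat.gcd_eq_left hgd, Nat.gcd_mul_lcm] at h2
  have h1 := Nat.totient_gcd_mul_totient_mul a b
  have h3 : a.totient * b.totient * Nat.gcd a b
      = (Nat.gcd a b).totient * (Nat.lcm a b).totient * Nat.gcd a b := by
    rw [← h1, h2]
  exact (Nat.eq_of_mul_eq_mul_right hg h3).symm

private lemma isAddCyclic_zmultiples {G : Type*} [AddGroup G] (x : G) :
    IsAddCyclic (zmultiples x) := by
  refine ⟨⟨x, mem_zmultiples x⟩, fun y => ?_⟩
  obtain ⟨k, hk⟩ := y.2
  exact ⟨k, Subtype.ext (by simpa using hk)⟩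

private lemma card_generators {G : Type*} [AddGroup G] [Fintype G] [DecidableEq G]
    [DecidableEq (AddSubgroup G)] (x0 : G) :
    (Finset.univ.filter fun x : G => zmultiples x = zmultiples x0).card
      = (Nat.card (zmultiples x0)).totient := by
  haveI : IsAddCyclic (zmultiples x0) := _root_.isAddCyclic_zmultiples x0
  classical
  rw [Nat.card_eq_fintype_card,
    ← IsAddCyclic.card_addOrderOf_eq_totient (α := zmultiples x0) (dvd_refl _)]
  refine Finset.card_bij
    (fun x hx => ⟨x, (Finset.mem_filter.mp hx).2 ▸ mem_zmultiples x⟩) ?_ ?_ ?_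
  · intro x hx
    have hx' := (Finset.mem_filter.mp hx).2
    simp only [Finset.mem_filter, Finset.mem_univ, true_and]
    calc addOrderOf (⟨x, (Finset.mem_filter.mp hx).2 ▸ mem_zmultiples x⟩ : zmultiples x0)
        = addOrderOf x := by rw [← AddSubgroup.addOrderOf_coe]
      _ = Nat.card (zmultiples x) := (Nat.card_zmultiples x).symm
      _ = Nat.card (zmultiples x0) := by rw [hx']
      _ = Fintype.card (zmultiples x0) := Nat.card_eq_fintype_card
  · intro x hx y hy h
    exact congrArg Subtype.val h
  · intro y hy
    have hy' := (Finset.mem_filter.mp hy).2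
    have hle : zmultiples (y : G) ≤ zmultiples x0 := zmultiples_le.mpr y.2
    have hc : Nat.card (zmultiples (y : G)) = Nat.card (zmultiples x0) := by
      rw [Nat.card_zmultiples (y : G), AddSubgroup.addOrderOf_coe, hy',
        Nat.card_eq_fintype_card]
    have heq := AddSubgroup.eq_of_le_of_card_ge hle hc.ge
    exact ⟨(y : G), Finset.mem_filter.mpr ⟨Finset.mem_univ _, heq⟩, rfl⟩

theorem cyclic_subgroup_count_zmod_prod (m n : ℕ) (hm : 0 < m) (hn : 0 < n) :
    Nat.card {H : AddSubgroup (ZMod m × ZMod n) // ∃ x, H = AddSubgroup.zmultiples x} =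
      ∑ a ∈ m.divisors, ∑ b ∈ n.divisors, Nat.totient (Nat.gcd a b) := by
  haveI : NeZero m := ⟨hm.ne'⟩
  haveI : NeZero n := ⟨hn.ne'⟩
  classical
  set G := ZMod m × ZMod n with hG
  set f : G → AddSubgroup G := fun x => zmultiples x with hf
  have hequiv : {H : AddSubgroup G // ∃ x, H = zmultiples x} ≃ (Set.range f) :=
    Equiv.subtypeEquivRight (fun H => by
      simp only [Set.mem_range, f]; exact ⟨fun ⟨x, h⟩ => ⟨x, h.symm⟩, fun ⟨x, h⟩ => ⟨x, h.symm⟩⟩)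
  rw [Nat.card_congr hequiv, Nat.card_eq_fintype_card, ← Set.toFinset_card, Set.toFinset_range]
  set sig : AddSubgroup G → ℕ × ℕ := fun H =>
    (Nat.card (H.map (AddMonoidHom.fst (ZMod m) (ZMod n))),
     Nat.card (H.map (AddMonoidHom.snd (ZMod m) (ZMod n)))) with hsig
  have hsig_f : ∀ x : G, sig (f x) = (addOrderOf x.1, addOrderOf x.2) := by
    intro x
    simp only [hsig, hf, AddMonoidHom.map_zmultiples, Nat.card_zmultiples]
    rfl
  have hmem : ∀ H ∈ Finset.univ.image f, sig H ∈ m.divisors ×ˢ n.divisors := by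
    intro H hH
    obtain ⟨x, -, rfl⟩ := Finset.mem_image.mp hH
    rw [hsig_f]
    simp only [Finset.mem_product, Nat.mem_divisors]
    refine ⟨⟨?_, hm.ne'⟩, ⟨?_, hn.ne'⟩⟩
    · simpa [ZMod.card] using addOrderOf_dvd_card (x := x.1)
    · simpa [ZMod.card] using addOrderOf_dvd_card (x := x.2)
  rw [Finset.card_eq_sum_card_fiberwise hmem, Finset.sum_product]
  refine Finset.sum_congr rfl fun a ha => Finset.sum_congr rfl fun b hb => ?_
  have hma : a ∣ m := (Nat.mem_divisors.mp ha).1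
  have hnb : b ∣ n := (Nat.mem_divisors.mp hb).1
  have ha0 : 0 < a := Nat.pos_of_mem_divisors ha
  have hb0 : 0 < b := Nat.pos_of_mem_divisors hb
  set E : Finset G := Finset.univ.filter
    (fun x : G => addOrderOf x.1 = a ∧ addOrderOf x.2 = b) with hE
  have hEcard : E.card = a.totient * b.totient := by
    rw [hE, ← Finset.univ_product_univ,
      Finset.filter_product (fun u : ZMod m => addOrderOf u = a)
        (fun v : ZMod n => addOrderOf v = b), Finset.card_product,
      IsAddCyclic.card_addOrderOf_eq_totient (by rw [ZMod.card]; exact hma),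
      IsAddCyclic.card_addOrderOf_eq_totient (by rw [ZMod.card]; exact hnb)]
  set Tab := ((Finset.univ.image f).filter (fun H => sig H = (a, b))) with hTab
  have hmem2 : ∀ x ∈ E, f x ∈ Tab := by
    intro x hx
    obtain ⟨-, hx1, hx2⟩ := Finset.mem_filter.mp hx
    refine Finset.mem_filter.mpr ⟨Finset.mem_image_of_mem f (Finset.mem_univ x), ?_⟩
    rw [hsig_f, hx1, hx2]
  have hEcard2 : E.card = ∑ H ∈ Tab, (E.filter fun x => f x = H).card :=
    Finset.card_eq_sum_card_fiberwise hmem2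
  have hfiber : ∀ H ∈ Tab, (E.filter fun x => f x = H).card = (Nat.lcm a b).totient := by
    intro H hH
    obtain ⟨hHim, hHsig⟩ := Finset.mem_filter.mp hH
    obtain ⟨x0, -, rfl⟩ := Finset.mem_image.mp hHim
    have hx0 : (addOrderOf x0.1, addOrderOf x0.2) = (a, b) := (hsig_f x0).symm.trans hHsig
    have hx01 : addOrderOf x0.1 = a := congrArg Prod.fst hx0
    have hx02 : addOrderOf x0.2 = b := congrArg Prod.snd hx0
    have hfilter_eq : (E.filter fun x => f x = f x0)
        = Finset.univ.filter fun x : G => zmultiples x = zmultiples x0 := by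
      ext x
      simp only [Finset.mem_filter, Finset.mem_univ, true_and, hE, hf]
      constructor
      · rintro ⟨-, h⟩; exact h
      · intro h
        have hs : (addOrderOf x.1, addOrderOf x.2) = (a, b) := by
          rw [← hsig_f x, show f x = f x0 from h, hsig_f x0, hx01, hx02]
        exact ⟨⟨congrArg Prod.fst hs, congrArg Prod.snd hs⟩, h⟩
    rw [hfilter_eq, card_generators x0, Nat.card_zmultiples, Prod.addOrderOf, hx01, hx02]
  have hkey : Tab.card * (Nat.lcm a b).totient = a.totient * b.totient := by
    rw [← hEcard, hEcard2, Finset.sum_congr rfl hfiber, Finset.sum_const, smul_eq_mul]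
  have hlcm0 : 0 < (Nat.lcm a b).totient :=
    Nat.totient_pos.mpr (Nat.lcm_pos ha0 hb0)
  have hfin := totient_gcd_lcm' ha0 hb0
  rw [← hkey] at hfin
  exact (Nat.eq_of_mul_eq_mul_right hlcm0 hfin).symm
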